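/- In a project-join tree (T, r, γ, π) of a CNF formula φ, if n is an internal node with distinct children o and q, then P(o) ∩ vars(Φ(q) · W_{P(q)}) = ∅, where P(n) is the union of labels π over the subtree rooted at n and Φ(n) is the set of clauses at the leaves of the subtree rooted at n. -/

import Mathlib

variable {V : Type*} [DecidableEq V]

structure Clause (V : Type*) where
  pos : Finset V
  neg : Finset V

def Clause.vars [DecidableEq V] (c : Clause V) : Finset V := c.pos ∪ c.neg

noncomputable def Clause.ind [DecidableEq V] (c : Clause V) (τ : Finset V) : ℝ :=
  if (∃ x ∈ c.pos, x ∈ τ) ∨ (∃ x ∈ c.neg, x ∉ τ) then 1 else 0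

inductive PJT (V : Type*) where
  | leaf (c : Clause V)
  | node (lbl : Finset V) (children : List (PJT V))

namespace PJT

def clauses : PJT V → Multiset (Clause V)
  | .leaf c => {c}
  | .node _ cs => (cs.attach.map (fun o => clauses o.1)).sum
decreasing_by
  have := List.sizeOf_lt_of_mem o.2
  simp only [PJT.node.sizeOf_spec]
  omega

def labels : PJT V → Multiset (Finset V)
  | .leaf _ => 0
  | .node lbl cs => lbl ::ₘ (cs.attach.map (fun o => labels o.1)).sum
decreasing_by
  have := List.sizeOf_lt_of_mem o.2
  simp only [PJT.node.sizeOf_spec]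
  omega

def P : PJT V → Finset V
  | .leaf _ => ∅
  | .node lbl cs => lbl ∪ (cs.attach.map (fun o => P o.1)).foldr (· ∪ ·) ∅
decreasing_by
  have := List.sizeOf_lt_of_mem o.2
  simp only [PJT.node.sizeOf_spec]
  omega

def varsOf : PJT V → Finset V
  | .leaf c => c.vars
  | .node lbl cs => (cs.attach.map (fun o => varsOf o.1)).foldr (· ∪ ·) ∅ \ lbl
decreasing_by
  have := List.sizeOf_lt_of_mem o.2
  simp only [PJT.node.sizeOf_spec]
  omega

def size : PJT V → ℕ
  | .leaf c => c.vars.card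
  | .node lbl cs => (varsOf (.node lbl cs) ∪ lbl).card

def width : PJT V → ℕ
  | .leaf c => c.vars.card
  | .node lbl cs =>
      max (size (.node lbl cs)) ((cs.attach.map (fun o => width o.1)).foldr max 0)
decreasing_by
  have := List.sizeOf_lt_of_mem o.2
  simp only [PJT.node.sizeOf_spec]
  omega

def wProd (W : V → Bool → ℝ) (S : Finset V) (τ : Finset V) : ℝ :=
  ∏ x ∈ S, W x (decide (x ∈ τ))

noncomputable def val (W : V → Bool → ℝ) : PJT V → Finset V → ℝ
  | .leaf c => c.ind
  | .node lbl cs => fun τ =>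
      ∑ σ ∈ lbl.powerset,
        (cs.attach.map (fun o => val W o.1 ((τ ∪ σ) ∩ varsOf o.1))).prod
          * wProd W lbl (τ ∪ σ)
decreasing_by
  have := List.sizeOf_lt_of_mem o.2
  simp only [PJT.node.sizeOf_spec]
  omega

inductive Subtree : PJT V → PJT V → Prop
  | refl (t : PJT V) : Subtree t t
  | child {s c : PJT V} {lbl : Finset V} {cs : List (PJT V)} :
      c ∈ cs → Subtree s c → Subtree s (.node lbl cs)

end PJT

def Formula.vars (φ : Finset (Clause V)) : Finset V := φ.sup Clause.vars

def clausesVars (M : Multiset (Clause V)) : Finset V := (M.map Clause.vars).sup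

structure IsPJT (φ : Finset (Clause V)) (t : PJT V) : Prop where
  clauses_eq : t.clauses = φ.val
  cover : t.P = Formula.vars φ
  disjoint_labels : (t.labels.map Finset.card).sum = (Formula.vars φ).card
  descend : ∀ lbl cs, PJT.Subtree (.node lbl cs) t →
    ∀ c ∈ φ, ∀ x ∈ lbl, x ∈ c.vars → c ∈ PJT.clauses (.node lbl cs)



section Aux
variable {V : Type*} [DecidableEq V]

lemma list_get_le_sum {α : Type*} (l : List (Multiset α)) (i : Fin l.length) :
    l.get i ≤ l.sum := by
  induction l with
  | nil => exact absurd i.2 (by simp)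
  | cons a l ih =>
    obtain ⟨iv, hi⟩ := i
    cases iv with
    | zero => simpa using Multiset.le_add_right a l.sum
    | succ k =>
      simp only [List.sum_cons, List.get]
      exact le_trans (ih ⟨k, by simpa using hi⟩) (Multiset.le_add_left _ _)

lemma list_two_get_le_sum {α : Type*} (l : List (Multiset α)) (i j : Fin l.length)
    (hij : i ≠ j) : l.get i + l.get j ≤ l.sum := by
  induction l with
  | nil => exact absurd i.2 (by simp)
  | cons a l ih =>
    obtain ⟨iv, hi⟩ := i
    obtain ⟨jv, hj⟩ := j
    cases iv with
    | zero =>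
      cases jv with
      | zero => simp at hij
      | succ k =>
        simp only [List.sum_cons, List.get]
        exact add_le_add_right (list_get_le_sum l ⟨k, by simpa using hj⟩) a
    | succ m =>
      cases jv with
      | zero =>
        simp only [List.sum_cons, List.get]
        rw [add_comm]
        exact add_le_add_right (list_get_le_sum l ⟨m, by simpa using hi⟩) a
      | succ k =>
        simp only [List.sum_cons, List.get]
        refine le_trans (ih ⟨m, by simpa using hi⟩ ⟨k, by simpa using hj⟩ ?_)
          (Multiset.le_add_left _ _)
        simp only [ne_eq, Fin.mk.injEq] at hij ⊢
        omega

lemma mem_msup_iff {M : Multiset (Finset V)} {x : V} :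
    x ∈ M.sup ↔ ∃ s ∈ M, x ∈ s := by
  induction M using Multiset.induction with
  | empty => simp
  | cons a s ih => simp [Multiset.sup_cons, ih, Finset.mem_union]

lemma msup_card_le (M : Multiset (Finset V)) :
    M.sup.card ≤ (M.map Finset.card).sum := by
  induction M using Multiset.induction with
  | empty => simp
  | cons a s ih =>
    simp only [Multiset.sup_cons, Multiset.map_cons, Multiset.sum_cons]
    calc (a ⊔ s.sup).card ≤ a.card + s.sup.card := Finset.card_union_le _ _
      _ ≤ a.card + (s.map Finset.card).sum := by omega

lemma disjoint_sup_of_add_le (M₁ M₂ M : Multiset (Finset V)) (h : M₁ + M₂ ≤ M)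
    (hM : (M.map Finset.card).sum ≤ M.sup.card) : Disjoint M₁.sup M₂.sup := by
  obtain ⟨R, rfl⟩ := Multiset.le_iff_exists_add.mp h
  have hsup : (M₁ + M₂ + R).sup = (M₁.sup ∪ M₂.sup) ∪ R.sup := by
    rw [Multiset.sup_add, Multiset.sup_add]; rfl
  have hcard : ((M₁ + M₂ + R).sup).card ≤ (M₁.sup ∪ M₂.sup).card + R.sup.card := by
    rw [hsup]; exact Finset.card_union_le _ _
  have hsum : ((M₁ + M₂ + R).map Finset.card).sum
      = (M₁.map Finset.card).sum + (M₂.map Finset.card).sum + (R.map Finset.card).sum := by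
    simp [Multiset.map_add]
  have h1 := msup_card_le M₁
  have h2 := msup_card_le M₂
  have hR := msup_card_le R
  have hub : (M₁.sup ∪ M₂.sup).card ≤ M₁.sup.card + M₂.sup.card := Finset.card_union_le _ _
  have key : (M₁.sup ∪ M₂.sup).card = M₁.sup.card + M₂.sup.card := by omega
  exact Finset.card_union_eq_card_add_card.mp key

namespace PJT

lemma clauses_node (lbl : Finset V) (cs : List (PJT V)) :
    (PJT.node lbl cs).clauses = (cs.map PJT.clauses).sum := by
  rw [PJT.clauses]
  congr 1
  exact List.attach_map_val (l := cs) (f := PJT.clauses)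

lemma labels_node (lbl : Finset V) (cs : List (PJT V)) :
    (PJT.node lbl cs).labels = lbl ::ₘ (cs.map PJT.labels).sum := by
  rw [PJT.labels, List.attach_map_val]

lemma Subtree.trans' {a b c : PJT V} (hab : Subtree a b) (hbc : Subtree b c) :
    Subtree a c := by
  induction hbc with
  | refl => exact hab
  | child hc _ ih => exact Subtree.child hc ih

lemma clauses_mono {s t : PJT V} (hst : Subtree s t) : s.clauses ≤ t.clauses := by
  induction hst with
  | refl => exact le_refl _
  | @child c lbl cs hc _ ih =>
    refine le_trans ih ?_
    rw [clauses_node]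
    obtain ⟨k, hk⟩ := List.mem_iff_get.mp hc
    rw [List.get_eq_getElem] at hk
    have := list_get_le_sum (cs.map PJT.clauses) ⟨k.1, by simpa using k.2⟩
    simpa [hk] using this

lemma labels_mono {s t : PJT V} (hst : Subtree s t) : s.labels ≤ t.labels := by
  induction hst with
  | refl => exact le_refl _
  | @child c lbl cs hc _ ih =>
    refine le_trans ih ?_
    rw [labels_node]
    refine le_trans ?_ (Multiset.le_cons_self _ _)
    obtain ⟨k, hk⟩ := List.mem_iff_get.mp hc
    rw [List.get_eq_getElem] at hk
    have := list_get_le_sum (cs.map PJT.labels) ⟨k.1, by simpa using k.2⟩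
    simpa [hk] using this

lemma mem_foldr_union {L : List (Finset V)} {x : V} :
    x ∈ L.foldr (· ∪ ·) ∅ ↔ ∃ A ∈ L, x ∈ A := by
  induction L with
  | nil => simp
  | cons a l ih => simp [ih]

lemma msup_list_sum (L : List (Multiset (Finset V))) :
    L.sum.sup = (L.map Multiset.sup).foldr (· ∪ ·) ∅ := by
  induction L with
  | nil => simp
  | cons a l ih => simp [Multiset.sup_add, ih]

lemma exists_subtree_of_mem_P {x : V} : ∀ t : PJT V, x ∈ t.P →
    ∃ lbl' cs', Subtree (PJT.node lbl' cs') t ∧ x ∈ lbl' := by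
  intro t
  induction t using PJT.P.induct with
  | case1 c => simp [PJT.P]
  | case2 lbl cs ih =>
    intro hx
    rw [PJT.P] at hx
    rcases Finset.mem_union.mp hx with h | h
    · exact ⟨lbl, cs, Subtree.refl _, h⟩
    · rw [mem_foldr_union] at h
      obtain ⟨A, hA, hxA⟩ := h
      obtain ⟨o, ho, rfl⟩ := List.mem_map.mp hA
      obtain ⟨lbl', cs', hsub, hxl⟩ := ih o hxA
      exact ⟨lbl', cs', Subtree.child o.2 hsub, hxl⟩

lemma P_eq_sup_labels : ∀ t : PJT V, t.P = t.labels.sup := by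
  intro t
  induction t using PJT.P.induct with
  | case1 c => simp [PJT.P, PJT.labels]
  | case2 lbl cs ih =>
    rw [PJT.P, PJT.labels, Multiset.sup_cons, msup_list_sum]
    have : (cs.attach.map fun o => PJT.labels o.1).map Multiset.sup
        = cs.attach.map fun o => PJT.P o.1 := by
      rw [List.map_map]
      refine List.map_congr_left ?_
      intro o _
      exact (ih o).symm
    rw [this]
    rfl

end PJT
end Aux

/-- In a project-join tree of `φ`, if `n` is an internal node with distinct
children `o` and `q`, then `P(o) ∩ vars(Φ(q) · W_{P(q)}) = ∅`, where
`vars(Φ(q) · W_{P(q)}) = vars(Φ(q)) ∪ P(q)`. -/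
theorem pjt_sibling_disjoint {V : Type*} [DecidableEq V]
    (φ : Finset (Clause V)) (t : PJT V) (h : IsPJT φ t)
    (lbl : Finset V) (cs : List (PJT V)) (hs : PJT.Subtree (.node lbl cs) t)
    (i j : Fin cs.length) (hij : i ≠ j) :
    Disjoint (cs.get i).P (clausesVars (cs.get j).clauses ∪ (cs.get j).P) := by
  classical
  set o := cs.get i with ho
  set q := cs.get j with hq
  have ho_mem : o ∈ cs := List.get_mem cs i
  have hq_mem : q ∈ cs := List.get_mem cs j
  have hsub_o : PJT.Subtree o t :=
    (PJT.Subtree.child ho_mem (PJT.Subtree.refl o)).trans' hs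
  have hsub_q : PJT.Subtree q t :=
    (PJT.Subtree.child hq_mem (PJT.Subtree.refl q)).trans' hs
  have hvij : (i : ℕ) ≠ (j : ℕ) := fun hh => hij (Fin.ext_iff.mpr hh)
  have hij' : (⟨i.1, by simpa using i.2⟩ : Fin (cs.map PJT.clauses).length)
      ≠ ⟨j.1, by simpa using j.2⟩ := by
    simp only [ne_eq, Fin.mk.injEq]
    exact hvij
  have hij'' : (⟨i.1, by simpa using i.2⟩ : Fin (cs.map PJT.labels).length)
      ≠ ⟨j.1, by simpa using j.2⟩ := by
    simp only [ne_eq, Fin.mk.injEq]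
    exact hvij
  have hcc : o.clauses + q.clauses ≤ t.clauses := by
    refine le_trans ?_ (PJT.clauses_mono hs)
    rw [PJT.clauses_node]
    have := list_two_get_le_sum (cs.map PJT.clauses) ⟨i.1, by simpa using i.2⟩
      ⟨j.1, by simpa using j.2⟩ hij'
    simpa [ho, hq, List.get_eq_getElem] using this
  have hll : o.labels + q.labels ≤ t.labels := by
    refine le_trans ?_ (PJT.labels_mono hs)
    rw [PJT.labels_node]
    refine le_trans ?_ (Multiset.le_cons_self _ _)
    have := list_two_get_le_sum (cs.map PJT.labels) ⟨i.1, by simpa using i.2⟩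
      ⟨j.1, by simpa using j.2⟩ hij''
    simpa [ho, hq, List.get_eq_getElem] using this
  rw [Finset.disjoint_union_right]
  constructor
  · rw [Finset.disjoint_left]
    intro x hxP hxV
    obtain ⟨lbl', cs', hsub', hxl⟩ := PJT.exists_subtree_of_mem_P o hxP
    simp only [clausesVars] at hxV
    obtain ⟨A, hA, hxA⟩ := mem_msup_iff.mp hxV
    obtain ⟨c, hcq, rfl⟩ := Multiset.mem_map.mp hA
    have hcφ : c ∈ φ := by
      have : c ∈ t.clauses := Multiset.mem_of_le (PJT.clauses_mono hsub_q) hcq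
      rwa [h.clauses_eq] at this
    have hdesc := h.descend lbl' cs' (hsub'.trans' hsub_o) c hcφ x hxl hxA
    have hco : c ∈ o.clauses := Multiset.mem_of_le (PJT.clauses_mono hsub') hdesc
    have hnodup : t.clauses.Nodup := by rw [h.clauses_eq]; exact φ.nodup
    have h1 : Multiset.count c (o.clauses + q.clauses) ≤ Multiset.count c t.clauses :=
      Multiset.count_le_of_le c hcc
    rw [Multiset.count_add] at h1
    have h2 := Multiset.nodup_iff_count_le_one.mp hnodup c
    have h3 := Multiset.one_le_count_iff_mem.mpr hco
    have h4 := Multiset.one_le_count_iff_mem.mpr hcq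
    omega
  · rw [PJT.P_eq_sup_labels o, PJT.P_eq_sup_labels q]
    refine disjoint_sup_of_add_le _ _ t.labels hll ?_
    rw [h.disjoint_labels, ← h.cover, PJT.P_eq_sup_labels t]
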